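/- Strong convexity of the log-partition function on a pinned bounded set: let K = X^{m-1} for a finite set X, fix x̄₀ ∈ K, and let Ũ_C = {θ : K → ℝ : θ_{x̄₀} = 0, ‖θ‖_∞ ≤ C}. For weights ρ̃_{x̄} > 0 and bounded cost c with ‖c‖_∞ ≤ M, the function Ψ(θ) = ∑_{y∈X} log(∑_{x̄∈K} e^{θ_{x̄} - c(y,x̄)} ρ̃_{x̄}) ρ_y is β-strongly convex on Ũ_C with β = e^{-4M-3C} ρ̃_{x̄₀} · min_{x̄} ρ̃_{x̄}, in the sense that its Hessian restricted to directions vanishing at x̄₀ satisfies D²Ψ(θ)(v,v) ≥ β‖v‖² for all θ ∈ Ũ_C and all v with v_{x̄₀} = 0. -/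

import Mathlib

private noncomputable def pS {ι : Type*} [Fintype ι] (θ v d w : ι → ℝ) (t : ℝ) : ℝ :=
  ∑ i, Real.exp ((θ i + t * v i) - d i) * w i

private noncomputable def pS1 {ι : Type*} [Fintype ι] (θ v d w : ι → ℝ) (t : ℝ) : ℝ :=
  ∑ i, v i * (Real.exp ((θ i + t * v i) - d i) * w i)

private noncomputable def pS2 {ι : Type*} [Fintype ι] (θ v d w : ι → ℝ) (t : ℝ) : ℝ :=
  ∑ i, v i ^ 2 * (Real.exp ((θ i + t * v i) - d i) * w i)

private lemma aux_d1 {ι : Type*} [Fintype ι] (θ v d w : ι → ℝ) (t : ℝ) :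
    HasDerivAt (pS θ v d w) (pS1 θ v d w t) t := by
  apply HasDerivAt.fun_sum
  intro i _
  have h1 : HasDerivAt (fun t : ℝ => (θ i + t * v i) - d i) (v i) t := by
    simpa using ((hasDerivAt_mul_const (v i)).const_add (θ i)).sub_const (d i)
  have h2 := h1.exp.mul_const (w i)
  convert h2 using 1
  · rfl
  · ring

private lemma aux_d2 {ι : Type*} [Fintype ι] (θ v d w : ι → ℝ) (t : ℝ) :
    HasDerivAt (pS1 θ v d w) (pS2 θ v d w t) t := by
  apply HasDerivAt.fun_sum
  intro i _
  have h1 : HasDerivAt (fun t : ℝ => (θ i + t * v i) - d i) (v i) t := by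
    simpa using ((hasDerivAt_mul_const (v i)).const_add (θ i)).sub_const (d i)
  have h2 := (h1.exp.mul_const (w i)).const_mul (v i)
  convert h2 using 1
  · rfl
  · ring

private lemma pS_pos {ι : Type*} [Fintype ι] [Nonempty ι] (θ v d w : ι → ℝ)
    (hw : ∀ i, 0 < w i) (t : ℝ) : 0 < pS θ v d w t :=
  Finset.sum_pos (fun i _ => mul_pos (Real.exp_pos _) (hw i)) Finset.univ_nonempty

/-- variance-type lower bound via Cauchy-Schwarz, pinned at `i0` -/
private lemma aux_var {ι : Type*} [Fintype ι] (p : ι → ℝ) (hp : ∀ i, 0 < p i)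
    (v : ι → ℝ) (i0 : ι) (hv : v i0 = 0) :
    p i0 * ∑ i, v i ^ 2 * p i ≤
      (∑ i, v i ^ 2 * p i) * (∑ i, p i) - (∑ i, v i * p i) ^ 2 := by
  classical
  set s := Finset.univ.erase i0 with hs
  have h1 : ∑ i ∈ s, v i * p i = ∑ i, v i * p i :=
    Finset.sum_erase _ (by rw [hv]; ring)
  have h2 : ∑ i ∈ s, p i = (∑ i, p i) - p i0 := by
    rw [← Finset.sum_erase_add Finset.univ _ (Finset.mem_univ i0)]
    ring
  have hCS : (∑ i ∈ s, v i * p i) ^ 2 ≤ (∑ i ∈ s, p i) * ∑ i ∈ s, v i ^ 2 * p i := by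
    have key := Finset.sum_mul_sq_le_sq_mul_sq s (fun i => Real.sqrt (p i))
      (fun i => v i * Real.sqrt (p i))
    calc (∑ i ∈ s, v i * p i) ^ 2
        = (∑ i ∈ s, Real.sqrt (p i) * (v i * Real.sqrt (p i))) ^ 2 := by
          congr 1; apply Finset.sum_congr rfl; intro i _
          rw [show Real.sqrt (p i) * (v i * Real.sqrt (p i))
            = v i * (Real.sqrt (p i) * Real.sqrt (p i)) by ring,
            Real.mul_self_sqrt (hp i).le]
      _ ≤ (∑ i ∈ s, Real.sqrt (p i) ^ 2) * ∑ i ∈ s, (v i * Real.sqrt (p i)) ^ 2 := key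
      _ = (∑ i ∈ s, p i) * ∑ i ∈ s, v i ^ 2 * p i := by
          congr 1
          · apply Finset.sum_congr rfl; intro i _; exact Real.sq_sqrt (hp i).le
          · apply Finset.sum_congr rfl; intro i _
            rw [mul_pow, Real.sq_sqrt (hp i).le]
  have h3 : ∑ i ∈ s, v i ^ 2 * p i ≤ ∑ i, v i ^ 2 * p i := by
    apply Finset.sum_le_sum_of_subset_of_nonneg (Finset.subset_univ s)
    intro i _ _
    exact mul_nonneg (sq_nonneg _) (hp i).le
  have h4 : (0:ℝ) ≤ ∑ i ∈ s, p i := Finset.sum_nonneg fun i _ => (hp i).le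
  have h6 : (∑ i, v i * p i) ^ 2 ≤ ((∑ i, p i) - p i0) * ∑ i, v i ^ 2 * p i := by
    rw [← h1]
    refine hCS.trans ?_
    rw [← h2]
    exact mul_le_mul_of_nonneg_left h3 h4
  nlinarith [h6]

theorem stmt_12 {X : Type*} [Fintype X] [Nonempty X]
    (k : ℕ) (hk : 0 < k)
    (ρ : X → ℝ) (hρ : ∀ x, 0 < ρ x) (hρs : ∑ x, ρ x = 1)
    (c : X → (Fin k → X) → ℝ) (M C : ℝ)
    (hc : ∀ y xb, |c y xb| ≤ M) (hC : 0 < C)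
    (xb0 : Fin k → X) :
    ∀ θ : (Fin k → X) → ℝ, θ xb0 = 0 → (∀ xb, |θ xb| ≤ C) →
    ∀ v : (Fin k → X) → ℝ, v xb0 = 0 →
      Real.exp (-4 * M - 3 * C) * (∏ i, ρ (xb0 i))
          * (Finset.univ.inf' Finset.univ_nonempty (fun xb : Fin k → X => ∏ i, ρ (xb i)))
          * (∑ xb, (v xb) ^ 2)
        ≤ iteratedDeriv 2
            (fun t : ℝ => ∑ y, Real.log
              (∑ xb, Real.exp ((θ xb + t * v xb) - c y xb) * ∏ i, ρ (xb i)) * ρ y) 0 := by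
  intro θ hθ0 hθC v hv0
  classical
  have hw : ∀ xb : Fin k → X, 0 < ∏ i, ρ (xb i) := fun xb => Finset.prod_pos fun i _ => hρ _
  have hwsum : ∑ xb : Fin k → X, ∏ i, ρ (xb i) = 1 := by
    rw [← Fintype.piFinset_univ, ← Finset.prod_univ_sum]
    simp [hρs]
  set w : (Fin k → X) → ℝ := fun xb => ∏ i, ρ (xb i) with hw_def
  have hrepr : ∀ (y : X) (t : ℝ),
      (∑ xb, Real.exp ((θ xb + t * v xb) - c y xb) * ∏ i, ρ (xb i))
        = pS θ v (c y) w t := fun y t => rfl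
  simp only [hrepr]
  have hSpos : ∀ (y : X) (t : ℝ), 0 < pS θ v (c y) w t := fun y t =>
    pS_pos θ v (c y) w hw t
  have hderiv1 : deriv (fun t : ℝ => ∑ y, Real.log (pS θ v (c y) w t) * ρ y)
      = fun t => ∑ y, pS1 θ v (c y) w t / pS θ v (c y) w t * ρ y := by
    funext t
    apply HasDerivAt.deriv
    apply HasDerivAt.fun_sum
    intro y _
    exact ((aux_d1 θ v (c y) w t).log (hSpos y t).ne').mul_const (ρ y)
  have hkey : iteratedDeriv 2 (fun t : ℝ => ∑ y, Real.log (pS θ v (c y) w t) * ρ y) 0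
      = ∑ y, (pS2 θ v (c y) w 0 * pS θ v (c y) w 0
          - pS1 θ v (c y) w 0 * pS1 θ v (c y) w 0) / pS θ v (c y) w 0 ^ 2 * ρ y := by
    rw [iteratedDeriv_succ, iteratedDeriv_one, hderiv1]
    apply HasDerivAt.deriv
    apply HasDerivAt.fun_sum
    intro y _
    exact (((aux_d2 θ v (c y) w 0).div (aux_d1 θ v (c y) w 0) (hSpos y 0).ne')).mul_const (ρ y)
  rw [hkey]
  -- now the inequality
  set mw : ℝ := Finset.univ.inf' Finset.univ_nonempty
    (fun xb : Fin k → X => ∏ i, ρ (xb i)) with hmw_def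
  have hmw_pos : 0 < mw := by
    rw [hmw_def, Finset.lt_inf'_iff]
    intro xb _
    exact hw xb
  have hmw_le : ∀ xb : Fin k → X, mw ≤ w xb := fun xb =>
    Finset.inf'_le _ (Finset.mem_univ xb)
  have hM : 0 ≤ M := le_trans (abs_nonneg _) (hc (Classical.arbitrary X) xb0)
  have hQ0 : (0:ℝ) ≤ ∑ xb, v xb ^ 2 := Finset.sum_nonneg fun xb _ => sq_nonneg _
  set β : ℝ := Real.exp (-4 * M - 3 * C) * w xb0 * mw * (∑ xb, v xb ^ 2) with hβ_def
  have hβ_nonneg : 0 ≤ β :=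
    mul_nonneg (mul_nonneg (mul_nonneg (Real.exp_pos _).le (hw xb0).le) hmw_pos.le) hQ0
  have hper : ∀ y, β ≤ (pS2 θ v (c y) w 0 * pS θ v (c y) w 0
      - pS1 θ v (c y) w 0 * pS1 θ v (c y) w 0) / pS θ v (c y) w 0 ^ 2 := by
    intro y
    set p : (Fin k → X) → ℝ :=
      fun xb => Real.exp ((θ xb + 0 * v xb) - c y xb) * w xb with hp_def
    have hp : ∀ xb, 0 < p xb := fun xb => mul_pos (Real.exp_pos _) (hw xb)
    have hS0 : pS θ v (c y) w 0 = ∑ xb, p xb := rfl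
    have hS10 : pS1 θ v (c y) w 0 = ∑ xb, v xb * p xb := rfl
    have hS20 : pS2 θ v (c y) w 0 = ∑ xb, v xb ^ 2 * p xb := rfl
    have hT_pos : (0:ℝ) < ∑ xb, p xb :=
      Finset.sum_pos (fun xb _ => hp xb) Finset.univ_nonempty
    have hT_le : ∑ xb, p xb ≤ Real.exp (C + M) := by
      calc ∑ xb, p xb ≤ ∑ xb, Real.exp (C + M) * w xb := by
            apply Finset.sum_le_sum
            intro xb _
            apply mul_le_mul_of_nonneg_right _ (hw xb).le
            apply Real.exp_le_exp.mpr
            have h1 := (abs_le.mp (hθC xb)).2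
            have h2 := (abs_le.mp (hc y xb)).1
            have h3 : (0:ℝ) * v xb = 0 := zero_mul _
            linarith
        _ = Real.exp (C + M) := by rw [← Finset.mul_sum, hw_def, hwsum, mul_one]
    have hp0_ge : Real.exp (-M) * w xb0 ≤ p xb0 := by
      apply mul_le_mul_of_nonneg_right _ (hw xb0).le
      apply Real.exp_le_exp.mpr
      have h2 := (abs_le.mp (hc y xb0)).2
      have h3 : (0:ℝ) * v xb0 = 0 := zero_mul _
      rw [hθ0]
      linarith
    have hQ_ge : Real.exp (-C - M) * mw * (∑ xb, v xb ^ 2) ≤ ∑ xb, v xb ^ 2 * p xb := by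
      rw [Finset.mul_sum]
      apply Finset.sum_le_sum
      intro xb _
      rw [show Real.exp (-C - M) * mw * v xb ^ 2
        = v xb ^ 2 * (Real.exp (-C - M) * mw) by ring]
      apply mul_le_mul_of_nonneg_left _ (sq_nonneg _)
      have h1 : Real.exp (-C - M) ≤ Real.exp ((θ xb + 0 * v xb) - c y xb) := by
        apply Real.exp_le_exp.mpr
        have h1 := (abs_le.mp (hθC xb)).1
        have h2 := (abs_le.mp (hc y xb)).2
        have h3 : (0:ℝ) * v xb = 0 := zero_mul _
        linarith
      calc Real.exp (-C - M) * mw ≤ Real.exp (-C - M) * w xb :=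
            mul_le_mul_of_nonneg_left (hmw_le xb) (Real.exp_pos _).le
        _ ≤ Real.exp ((θ xb + 0 * v xb) - c y xb) * w xb :=
            mul_le_mul_of_nonneg_right h1 (hw xb).le
    have hQnn : (0:ℝ) ≤ ∑ xb, v xb ^ 2 * p xb :=
      Finset.sum_nonneg fun xb _ => mul_nonneg (sq_nonneg _) (hp xb).le
    have hvar := aux_var p hp v xb0 hv0
    rw [hS0, hS10, hS20, le_div_iff₀ (pow_pos hT_pos 2)]
    have hexp : β * Real.exp (C + M) ^ 2
        = (Real.exp (-M) * w xb0) * (Real.exp (-C - M) * mw * (∑ xb, v xb ^ 2)) := by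
      rw [hβ_def, sq, ← Real.exp_add]
      rw [show Real.exp (-4 * M - 3 * C) * w xb0 * mw * (∑ xb, v xb ^ 2)
          * Real.exp ((C + M) + (C + M))
        = (Real.exp (-4 * M - 3 * C) * Real.exp ((C + M) + (C + M)))
          * (w xb0 * mw * (∑ xb, v xb ^ 2)) by ring, ← Real.exp_add]
      rw [show (-4 * M - 3 * C) + ((C + M) + (C + M)) = (-M) + (-C - M) by ring,
        Real.exp_add]
      ring
    have hsq : (∑ xb, p xb) ^ 2 ≤ Real.exp (C + M) ^ 2 :=
      pow_le_pow_left₀ hT_pos.le hT_le 2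
    have step1 : β * (∑ xb, p xb) ^ 2 ≤ β * Real.exp (C + M) ^ 2 :=
      mul_le_mul_of_nonneg_left hsq hβ_nonneg
    have step2 : (Real.exp (-M) * w xb0) * (Real.exp (-C - M) * mw * (∑ xb, v xb ^ 2))
        ≤ p xb0 * ∑ xb, v xb ^ 2 * p xb := by
      apply mul_le_mul hp0_ge hQ_ge _ (hp xb0).le
      exact mul_nonneg (mul_nonneg (Real.exp_pos _).le hmw_pos.le) hQ0
    calc β * (∑ xb, p xb) ^ 2 ≤ p xb0 * ∑ xb, v xb ^ 2 * p xb := by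
          rw [hexp] at step1; linarith
      _ ≤ (∑ xb, v xb ^ 2 * p xb) * (∑ xb, p xb) - (∑ xb, v xb * p xb) ^ 2 := hvar
      _ = (∑ xb, v xb ^ 2 * p xb) * (∑ xb, p xb)
          - (∑ xb, v xb * p xb) * (∑ xb, v xb * p xb) := by ring
  calc β = β * ∑ y, ρ y := by rw [hρs, mul_one]
    _ = ∑ y, β * ρ y := by rw [Finset.mul_sum]
    _ ≤ ∑ y, (pS2 θ v (c y) w 0 * pS θ v (c y) w 0
          - pS1 θ v (c y) w 0 * pS1 θ v (c y) w 0) / pS θ v (c y) w 0 ^ 2 * ρ y := by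
        apply Finset.sum_le_sum
        intro y _
        exact mul_le_mul_of_nonneg_right (hper y) (hρ y).le
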